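/- Let G=(V,E) be a connected simple graph not isomorphic to a star, let k be an integer with 1 ≤ k < |V|−1, and let G'=(V',E') = β(G,k). If S1 ⊊ V' is such that G'[S1] is a proportionally dense subgraph and |S1| ≥ |L| + |M| + k, then there exists S2 ⊊ V' such that G'[S2] is a proportionally dense subgraph, |S2| ≥ |S1|, and L ∪ M ⊆ S2. -/

import Mathlib

open SimpleGraph

/-- Number of neighbors of `v` inside `T`. -/
noncomputable def degIn {W : Type*} (G : SimpleGraph W) (T : Set W) (v : W) : ℕ :=
  (T ∩ G.neighborSet v).ncard

/-- `G[S]` is a proportionally dense subgraph. -/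
def IsPDS {W : Type*} (G : SimpleGraph W) (S : Set W) : Prop :=
  S ⊂ Set.univ ∧ 2 ≤ S.ncard ∧
    ∀ u ∈ S, degIn G Sᶜ u * (S.ncard - 1) ≤ degIn G S u * Sᶜ.ncard

/-- A star is a complete bipartite graph `K_{1,ℓ}`, `ℓ ≥ 1`. -/
def IsStar {V : Type*} (G : SimpleGraph V) : Prop :=
  ∃ ℓ : ℕ, 1 ≤ ℓ ∧ Nonempty (G ≃g completeBipartiteGraph Unit (Fin ℓ))

/-- The number `|L| = |M| ⬝ (|V| - k - 1) - k + 1` of extra vertices in `β(G,k)`. -/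
noncomputable def lsize {V : Type*} [Fintype V] (G : SimpleGraph V) (k : ℕ) : ℕ :=
  G.edgeSet.ncard * (Fintype.card V - k - 1) - k + 1

/-- Vertex type of the bipartite graph `β(G,k)`: `L` (the `Fin` part), `M` (edge
vertices), and `N = V`. -/
abbrev BetaVert (V : Type*) [Fintype V] (G : SimpleGraph V) (k : ℕ) : Type _ :=
  (Fin (lsize G k) ⊕ ↥G.edgeSet) ⊕ V

/-- The bipartite graph `β(G,k)`: every vertex of `M` is adjacent to every vertex
of `L`, and a vertex `e ∈ M` is adjacent to `u ∈ N` iff `u` is not an endpoint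
of the edge `e` of `G`; there are no other edges. -/
def betaGraph {V : Type*} [Fintype V] (G : SimpleGraph V) (k : ℕ) :
    SimpleGraph (BetaVert V G k) where
  Adj x y :=
    match x, y with
    | Sum.inl (Sum.inl _), Sum.inl (Sum.inr _) => True
    | Sum.inl (Sum.inr _), Sum.inl (Sum.inl _) => True
    | Sum.inl (Sum.inr e), Sum.inr u => u ∉ (e : Sym2 V)
    | Sum.inr u, Sum.inl (Sum.inr e) => u ∉ (e : Sym2 V)
    | _, _ => False
  symm := by
    constructor
    rintro ((a | e) | u) ((b | f) | v) h <;> simp_all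
  loopless := by
    constructor
    rintro ((a | e) | u) h <;> simp_all

/-- The set `L ∪ M` in `β(G,k)`. -/
def betaLM {V : Type*} [Fintype V] (G : SimpleGraph V) (k : ℕ) : Set (BetaVert V G k) :=
  Set.range Sum.inl

/-- The set `M` of edge-vertices in `β(G,k)`. -/
def betaM {V : Type*} [Fintype V] (G : SimpleGraph V) (k : ℕ) : Set (BetaVert V G k) :=
  Set.range (fun e : ↥G.edgeSet => Sum.inl (Sum.inr e))
section Infra
variable {V : Type*} [Fintype V] {G : SimpleGraph V} {k : ℕ}

private def betaL (G : SimpleGraph V) (k : ℕ) : Set (BetaVert V G k) :=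
  Set.range (fun a : Fin (lsize G k) => Sum.inl (Sum.inl a))

private def betaN (G : SimpleGraph V) (k : ℕ) : Set (BetaVert V G k) :=
  Set.range Sum.inr

private lemma nbhd_L (a : Fin (lsize G k)) :
    (betaGraph G k).neighborSet (Sum.inl (Sum.inl a)) = betaM G k := by
  ext x
  rcases x with ((b | f) | u) <;>
    simp [betaGraph, betaM, SimpleGraph.neighborSet]

private lemma nbhd_M (e : ↥G.edgeSet) :
    (betaGraph G k).neighborSet (Sum.inl (Sum.inr e)) =
      betaL G k ∪ Sum.inr '' {u : V | u ∉ (e : Sym2 V)} := by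
  ext x
  rcases x with ((b | f) | u) <;>
    simp [betaGraph, betaL, SimpleGraph.neighborSet]

private lemma nbhd_N (u : V) :
    (betaGraph G k).neighborSet (Sum.inr u) ⊆ betaM G k := by
  intro x hx
  rcases x with ((b | f) | w) <;> simp [betaGraph, SimpleGraph.neighborSet, betaM] at hx ⊢

private lemma ncard_betaL : (betaL G k).ncard = lsize G k := by
  rw [betaL, ← Nat.card_coe_set_eq,
    Nat.card_range_of_injective (fun a b hab => by simpa using hab), Nat.card_eq_fintype_card,
    Fintype.card_fin]

private lemma ncard_betaM : (betaM G k).ncard = G.edgeSet.ncard := by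
  rw [betaM, ← Nat.card_coe_set_eq,
    Nat.card_range_of_injective (fun a b hab => by simpa using hab), Nat.card_coe_set_eq]

private lemma ncard_betaN : (betaN G k).ncard = Fintype.card V := by
  rw [betaN, ← Nat.card_coe_set_eq,
    Nat.card_range_of_injective Sum.inr_injective, Nat.card_eq_fintype_card]

private lemma betaLM_eq : betaLM G k = betaL G k ∪ betaM G k := by
  ext x
  rcases x with ((b | f) | u) <;> simp [betaLM, betaL, betaM]

private lemma card_betaVert :
    Nat.card (BetaVert V G k) = lsize G k + G.edgeSet.ncard + Fintype.card V := by
  simp [Nat.card_eq_fintype_card, Fintype.card_sum, ← Nat.card_coe_set_eq]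

private lemma partition (T : Set (BetaVert V G k)) :
    T.ncard = (T ∩ betaL G k).ncard + (T ∩ betaM G k).ncard + (T ∩ betaN G k).ncard := by
  have hd1 : Disjoint (T ∩ betaL G k) (T ∩ betaM G k) := by
    rw [Set.disjoint_left]
    rintro x ⟨-, a, rfl⟩ ⟨-, b, hb⟩
    simp at hb
  have hd2 : Disjoint (T ∩ betaL G k) (T ∩ betaN G k) := by
    rw [Set.disjoint_left]
    rintro x ⟨-, a, rfl⟩ ⟨-, b, hb⟩
    simp at hb
  have hd3 : Disjoint (T ∩ betaM G k) (T ∩ betaN G k) := by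
    rw [Set.disjoint_left]
    rintro x ⟨-, a, rfl⟩ ⟨-, b, hb⟩
    simp at hb
  have hunion : T = (T ∩ betaL G k) ∪ ((T ∩ betaM G k) ∪ (T ∩ betaN G k)) := by
    ext x
    rcases x with ((b | f) | u) <;> simp [betaL, betaM, betaN]
  conv_lhs => rw [hunion]
  rw [Set.ncard_union_eq (Set.disjoint_union_right.2 ⟨hd1, hd2⟩),
    Set.ncard_union_eq hd3]
  omega

/-- `(T∩A) + (Tᶜ∩A) = A` in cardinalities. -/
private lemma inter_add_compl_inter {X : Type*} [Finite X] (T A : Set X) :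
    (T ∩ A).ncard + (Tᶜ ∩ A).ncard = A.ncard := by
  rw [← Set.ncard_union_eq (by
    rw [Set.disjoint_left]; rintro x ⟨hx, -⟩ ⟨hx', -⟩; exact hx' hx)]
  congr 1
  rw [← Set.union_inter_distrib_right, Set.union_compl_self, Set.univ_inter]

private lemma degIn_L (T : Set (BetaVert V G k)) (a : Fin (lsize G k)) :
    degIn (betaGraph G k) T (Sum.inl (Sum.inl a)) = (T ∩ betaM G k).ncard := by
  rw [degIn, nbhd_L]

private lemma degIn_M (T : Set (BetaVert V G k)) (e : ↥G.edgeSet) :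
    degIn (betaGraph G k) T (Sum.inl (Sum.inr e)) =
      (T ∩ betaL G k).ncard + (T ∩ Sum.inr '' {u : V | u ∉ (e : Sym2 V)}).ncard := by
  rw [degIn, nbhd_M, Set.inter_union_distrib_left, Set.ncard_union_eq]
  rw [Set.disjoint_left]
  rintro x ⟨-, a, rfl⟩ ⟨-, b, -, hb⟩
  simp at hb

private lemma degIn_N_zero (T : Set (BetaVert V G k)) (hT : betaM G k ⊆ T) (u : V) :
    degIn (betaGraph G k) Tᶜ (Sum.inr u) = 0 := by
  rw [degIn, Set.ncard_eq_zero]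
  rw [Set.eq_empty_iff_forall_notMem]
  rintro x ⟨hx1, hx2⟩
  exact hx1 (hT (nbhd_N u hx2))

end Infra

private lemma connected_le_ncard_edges {V : Type*} [Fintype V] {G : SimpleGraph V}
    (h : G.Connected) : Fintype.card V ≤ G.edgeSet.ncard + 1 := by
  classical
  obtain ⟨r⟩ := h.nonempty
  have key : ∀ v : V, v ≠ r → ∃ w : V, G.Adj v w ∧ G.dist w r + 1 = G.dist v r := by
    intro v hv
    have hpos : 0 < G.dist v r := h.pos_dist_of_ne hv
    obtain ⟨p, hp⟩ := (h.preconnected v r).exists_walk_length_eq_dist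
    cases p with
    | nil => exact absurd rfl hv
    | @cons _ w _ h' q =>
      refine ⟨w, h', ?_⟩
      have h1 : G.dist w r ≤ q.length := SimpleGraph.dist_le q
      have h2 : G.dist v r ≤ G.dist w r + 1 := by
        obtain ⟨q', hq'⟩ := (h.preconnected w r).exists_walk_length_eq_dist
        have := SimpleGraph.dist_le (SimpleGraph.Walk.cons h' q')
        simp only [SimpleGraph.Walk.length_cons, hq'] at this
        omega
      simp only [SimpleGraph.Walk.length_cons] at hp
      omega
  choose f hf1 hf2 using key
  have hg : Function.Injective (fun x : {v : V // v ≠ r} =>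
      (⟨s(x.1, f x.1 x.2), by rw [SimpleGraph.mem_edgeSet]; exact hf1 x.1 x.2⟩ : ↥G.edgeSet)) := by
    rintro ⟨v, hv⟩ ⟨v', hv'⟩ hEq
    simp only [Subtype.mk.injEq, Sym2.eq_iff] at hEq
    rcases hEq with ⟨h1, h2⟩ | ⟨h1, h2⟩
    · exact Subtype.ext h1
    · exfalso
      have a1 := hf2 v hv
      have a2 := hf2 v' hv'
      rw [h2] at a1
      rw [← h1] at a2
      omega
  have hcard := Nat.card_le_card_of_injective _ hg
  have e1 : Nat.card {v : V // v ≠ r} = ({v : V | v ≠ r} : Set V).ncard :=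
    Nat.card_coe_set_eq _
  have e2 : ({v : V | v ≠ r} : Set V) = ({r} : Set V)ᶜ := by ext x; simp
  have e3 := Set.ncard_add_ncard_compl ({r} : Set V)
  rw [Set.ncard_singleton, Nat.card_eq_fintype_card] at e3
  rw [e1, e2] at hcard
  rw [Nat.card_coe_set_eq] at hcard
  omega

/-- Lemma 6 of the paper: any PDS of `β(G,k)` of size at least `|L| + |M| + k` can
be turned into a PDS at least as large containing `L ∪ M`. -/
theorem beta_pds_enlarge {V : Type*} [Fintype V] (G : SimpleGraph V)
    (hconn : G.Connected) (hstar : ¬ IsStar G)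
    (k : ℕ) (hk1 : 1 ≤ k) (hk2 : k < Fintype.card V - 1)
    (S1 : Set (BetaVert V G k)) (h1 : IsPDS (betaGraph G k) S1)
    (hcard : lsize G k + G.edgeSet.ncard + k ≤ S1.ncard) :
    ∃ S2 : Set (BetaVert V G k),
      IsPDS (betaGraph G k) S2 ∧ S1.ncard ≤ S2.ncard ∧ betaLM G k ⊆ S2 := by
  classical
  obtain ⟨hproper, h2, hpds⟩ := h1
  -- notation
  have hn2 : k + 2 ≤ Fintype.card V := by omega
  have hmn : Fintype.card V ≤ G.edgeSet.ncard + 1 := connected_le_ncard_edges hconn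
  obtain ⟨q, hq⟩ : ∃ q, q = G.edgeSet.ncard * (Fintype.card V - k - 1) := ⟨_, rfl⟩
  have hq_ge : G.edgeSet.ncard ≤ q := by
    rw [hq]; exact Nat.le_mul_of_pos_right _ (by omega)
  have hLval : lsize G k + k = q + 1 := by
    unfold lsize; rw [← hq]; omega
  -- cardinal bookkeeping for S1
  have hpartS1 := partition S1
  have hsplitL := inter_add_compl_inter S1 (betaL G k)
  have hsplitM := inter_add_compl_inter S1 (betaM G k)
  have hsplitN := inter_add_compl_inter S1 (betaN G k)
  rw [ncard_betaL] at hsplitL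
  rw [ncard_betaM] at hsplitM
  rw [ncard_betaN] at hsplitN
  have hpartS1c := partition S1ᶜ
  have hcompl := Set.ncard_add_ncard_compl S1
  rw [card_betaVert] at hcompl
  -- compl nonempty
  obtain ⟨x0, hx0⟩ := (Set.ne_univ_iff_exists_notMem S1).mp (Set.ssubset_univ_iff.mp hproper)
  have hc1 : 1 ≤ S1ᶜ.ncard := by
    rw [Nat.one_le_iff_ne_zero]
    intro h0
    rw [Set.ncard_eq_zero (Set.toFinite _)] at h0
    rw [Set.eq_empty_iff_forall_notMem] at h0
    exact h0 x0 hx0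
  -- Step (i): S1 contains a vertex of L
  have hsL1 : 1 ≤ (S1 ∩ betaL G k).ncard := by
    by_contra hcon
    have hsL0 : (S1 ∩ betaL G k).ncard = 0 := by omega
    -- S1 contains a vertex of M
    have hM1 : 1 ≤ (S1 ∩ betaM G k).ncard := by
      have hsN_le : (S1 ∩ betaN G k).ncard ≤ Fintype.card V := by
        rw [← ncard_betaN (G := G) (k := k)]
        exact Set.ncard_le_ncard Set.inter_subset_right (Set.toFinite _)
      omega
    obtain ⟨x, hx⟩ := Set.nonempty_of_ncard_ne_zero (show (S1 ∩ betaM G k).ncard ≠ 0 by omega)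
    obtain ⟨hxS, e, rfl⟩ := hx
    have hineq := hpds _ hxS
    rw [degIn_M, degIn_M] at hineq
    -- bounds
    have hB1 : (S1 ∩ Sum.inr '' {u : V | u ∉ (e : Sym2 V)}).ncard ≤ Fintype.card V := by
      rw [← ncard_betaN (G := G) (k := k)]
      refine Set.ncard_le_ncard ?_ (Set.toFinite _)
      rintro y ⟨-, w, -, rfl⟩
      exact ⟨w, rfl⟩
    have hcN : S1ᶜ.ncard ≤ Fintype.card V - k := by omega
    have hcLfull : (S1ᶜ ∩ betaL G k).ncard = lsize G k := by omega
    have e0 : (Fintype.card V - 1) * (Fintype.card V - k) =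
        (Fintype.card V - 1) * (Fintype.card V - k - 1) + (Fintype.card V - 1) := by
      conv_lhs => rw [show Fintype.card V - k = (Fintype.card V - k - 1) + 1 from by omega]
      rw [Nat.mul_succ]
    have e1 : (Fintype.card V - 1) * (Fintype.card V - k - 1) ≤ q := by
      rw [hq]; exact Nat.mul_le_mul_right _ (by omega)
    have e2 : (Fintype.card V - k) * ((Fintype.card V - 1) * (Fintype.card V - k)) ≤
        ((S1ᶜ ∩ betaL G k).ncard +
          (S1ᶜ ∩ Sum.inr '' {u : V | u ∉ (e : Sym2 V)}).ncard) * (S1.ncard - 1) := by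
      apply Nat.mul_le_mul
      · omega
      · omega
    have e3 : ((S1 ∩ betaL G k).ncard +
          (S1 ∩ Sum.inr '' {u : V | u ∉ (e : Sym2 V)}).ncard) * S1ᶜ.ncard ≤
        Fintype.card V * (Fintype.card V - k) :=
      Nat.mul_le_mul (by omega) hcN
    have e4 : (Fintype.card V - k) * ((Fintype.card V - 1) * (Fintype.card V - k)) ≤
        Fintype.card V * (Fintype.card V - k) := le_trans e2 (le_trans hineq e3)
    rw [mul_comm (Fintype.card V) (Fintype.card V - k)] at e4
    have e5 : (Fintype.card V - 1) * (Fintype.card V - k) ≤ Fintype.card V :=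
      Nat.le_of_mul_le_mul_left e4 (by omega)
    have e6 : (Fintype.card V - 1) * 2 ≤ (Fintype.card V - 1) * (Fintype.card V - k) :=
      Nat.mul_le_mul_left _ (by omega)
    omega
  -- Step (ii): M ⊆ S1
  have hMfull : (S1ᶜ ∩ betaM G k).ncard = 0 := by
    obtain ⟨x, hx⟩ := Set.nonempty_of_ncard_ne_zero (show (S1 ∩ betaL G k).ncard ≠ 0 by omega)
    obtain ⟨hxS, a, rfl⟩ := hx
    have hineq := hpds _ hxS
    rw [degIn_L, degIn_L] at hineq
    by_contra hcm
    have b1 : S1.ncard - 1 ≤ (S1ᶜ ∩ betaM G k).ncard * (S1.ncard - 1) :=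
      Nat.le_mul_of_pos_left _ (by omega)
    have b2 : (S1 ∩ betaM G k).ncard * S1ᶜ.ncard ≤
        (G.edgeSet.ncard - 1) * (Fintype.card V - k) :=
      Nat.mul_le_mul (by omega) (by omega)
    have hid2 : (G.edgeSet.ncard - 1) * (Fintype.card V - k) + (Fintype.card V - k) =
        G.edgeSet.ncard * (Fintype.card V - k) := by
      conv_rhs => rw [show G.edgeSet.ncard = (G.edgeSet.ncard - 1) + 1 from by omega]
      rw [Nat.succ_mul]
    have hid3 : G.edgeSet.ncard * (Fintype.card V - k) = q + G.edgeSet.ncard := by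
      conv_lhs => rw [show Fintype.card V - k = (Fintype.card V - k - 1) + 1 from by omega]
      rw [Nat.mul_succ, ← hq]
    omega
  have hMempty : S1ᶜ ∩ betaM G k = ∅ := (Set.ncard_eq_zero (Set.toFinite _)).mp hMfull
  have hMsub : betaM G k ⊆ S1 := by
    intro x hxM
    by_contra hxn
    rw [Set.eq_empty_iff_forall_notMem] at hMempty
    exact hMempty x ⟨hxn, hxM⟩
  -- Step (iii): no edge of G has both endpoints in S1
  have hNoEdge : ∀ u v : V, G.Adj u v → Sum.inr u ∈ S1 → Sum.inr v ∈ S1 → False := by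
    intro u v huv hu hv
    have hxS : (Sum.inl (Sum.inr ⟨s(u, v), huv⟩) : BetaVert V G k) ∈ S1 :=
      hMsub ⟨⟨s(u, v), huv⟩, rfl⟩
    have hineq := hpds _ hxS
    rw [degIn_M, degIn_M] at hineq
    have hAeq : S1ᶜ ∩ Sum.inr '' {w : V | w ∉ ((⟨s(u, v), huv⟩ : ↥G.edgeSet) : Sym2 V)} =
        S1ᶜ ∩ betaN G k := by
      ext x
      constructor
      · rintro ⟨hx1, w, -, rfl⟩
        exact ⟨hx1, w, rfl⟩
      · rintro ⟨hx1, w, rfl⟩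
        refine ⟨hx1, w, ?_, rfl⟩
        intro hmem
        rcases Sym2.mem_iff.mp hmem with rfl | rfl
        · exact hx1 hu
        · exact hx1 hv
    rw [hAeq] at hineq
    -- the two endpoints are in S1 ∩ N but not counted in the S1-degree
    have hdisj : Disjoint
        (S1 ∩ Sum.inr '' {w : V | w ∉ ((⟨s(u, v), huv⟩ : ↥G.edgeSet) : Sym2 V)})
        ({Sum.inr u, Sum.inr v} : Set (BetaVert V G k)) := by
      rw [Set.disjoint_left]
      rintro x ⟨-, w, hw, rfl⟩ hmem
      rcases hmem with h | h
      · rw [Sum.inr.injEq] at h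
        exact hw (h ▸ Sym2.mem_mk_left u v)
      · rw [Set.mem_singleton_iff, Sum.inr.injEq] at h
        exact hw (h ▸ Sym2.mem_mk_right u v)
    have hsub : (S1 ∩ Sum.inr '' {w : V | w ∉ ((⟨s(u, v), huv⟩ : ↥G.edgeSet) : Sym2 V)}) ∪
        ({Sum.inr u, Sum.inr v} : Set (BetaVert V G k)) ⊆ S1 ∩ betaN G k := by
      rintro x (⟨hx1, w, -, rfl⟩ | hx1)
      · exact ⟨hx1, w, rfl⟩
      · rcases hx1 with h | h
        · subst h; exact ⟨hu, u, rfl⟩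
        · rw [Set.mem_singleton_iff] at h; subst h; exact ⟨hv, v, rfl⟩
    have hcard2 :
        (S1 ∩ Sum.inr '' {w : V | w ∉ ((⟨s(u, v), huv⟩ : ↥G.edgeSet) : Sym2 V)}).ncard + 2 ≤
        (S1 ∩ betaN G k).ncard := by
      have h := Set.ncard_le_ncard hsub (Set.toFinite _)
      rw [Set.ncard_union_eq hdisj] at h
      rw [Set.ncard_pair (by simp [huv.ne] : (Sum.inr u : BetaVert V G k) ≠ Sum.inr v)] at h
      omega
    -- cancel |S1ᶜ| > 0
    set B := (S1 ∩ Sum.inr '' {w : V | w ∉ ((⟨s(u, v), huv⟩ : ↥G.edgeSet) : Sym2 V)}).ncard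
    have hccalc : (S1ᶜ ∩ betaL G k).ncard + (S1ᶜ ∩ betaN G k).ncard = S1ᶜ.ncard := by omega
    have hkey : S1.ncard - 1 ≤ (S1 ∩ betaL G k).ncard + B := by
      by_contra hno
      have hx1 : S1ᶜ.ncard * ((S1 ∩ betaL G k).ncard + B + 1) ≤
          S1ᶜ.ncard * (S1.ncard - 1) := Nat.mul_le_mul_left _ (by omega)
      have hx2 : S1ᶜ.ncard * (S1.ncard - 1) =
          ((S1ᶜ ∩ betaL G k).ncard + (S1ᶜ ∩ betaN G k).ncard) * (S1.ncard - 1) := by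
        rw [hccalc]
      have hx3 : ((S1 ∩ betaL G k).ncard + B) * S1ᶜ.ncard =
          S1ᶜ.ncard * ((S1 ∩ betaL G k).ncard + B) := mul_comm _ _
      have hx4 : S1ᶜ.ncard * ((S1 ∩ betaL G k).ncard + B + 1) =
          S1ᶜ.ncard * ((S1 ∩ betaL G k).ncard + B) + S1ᶜ.ncard := Nat.mul_succ _ _
      omega
    omega
  -- Step (iv): construct S2
  set D : Set (BetaVert V G k) := S1 ∩ betaN G k with hD
  set S2 : Set (BetaVert V G k) := (betaL G k ∪ betaM G k) ∪ D with hS2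
  have hLS2 : betaL G k ⊆ S2 := fun x hx => Or.inl (Or.inl hx)
  have hMS2 : betaM G k ⊆ S2 := fun x hx => Or.inl (Or.inr hx)
  have hDS2 : D ⊆ S2 := fun x hx => Or.inr hx
  have hDN : D ⊆ betaN G k := Set.inter_subset_right
  have i1 : S2 ∩ betaL G k = betaL G k := Set.inter_eq_self_of_subset_right hLS2
  have i2 : S2 ∩ betaM G k = betaM G k := Set.inter_eq_self_of_subset_right hMS2
  have i3 : S2 ∩ betaN G k = D := by
    apply subset_antisymm
    · rintro x ⟨hx1, hx2⟩
      rcases hx1 with (⟨a, rfl⟩ | ⟨f, rfl⟩) | hxD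
      · obtain ⟨w, hw⟩ := hx2; simp at hw
      · obtain ⟨w, hw⟩ := hx2; simp at hw
      · exact hxD
    · exact Set.subset_inter hDS2 hDN
  have hpartS2 := partition S2
  have hsplit2L := inter_add_compl_inter S2 (betaL G k)
  have hsplit2M := inter_add_compl_inter S2 (betaM G k)
  have hsplit2N := inter_add_compl_inter S2 (betaN G k)
  rw [i1, ncard_betaL] at hsplit2L
  rw [i2, ncard_betaM] at hsplit2M
  rw [i3, ncard_betaN] at hsplit2N
  have j1 : (S2ᶜ ∩ betaL G k).ncard = 0 := by omega
  have j2 : (S2ᶜ ∩ betaM G k).ncard = 0 := by omega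
  have hpartS2c := partition S2ᶜ
  have hs2card : S2.ncard = lsize G k + G.edgeSet.ncard + D.ncard := by
    rw [hpartS2, i1, i2, i3, ncard_betaL, ncard_betaM]
  -- a vertex of N outside S1
  have hinrS2 : ∀ w : V, Sum.inr w ∉ S1 → (Sum.inr w : BetaVert V G k) ∉ S2 := by
    intro w hw
    rintro ((⟨a, ha⟩ | ⟨f, hf⟩) | ⟨hw1, -⟩)
    · simp at ha
    · simp at hf
    · exact hw hw1
  obtain ⟨z0, hz0⟩ := Set.nonempty_of_ncard_ne_zero (show G.edgeSet.ncard ≠ 0 by omega)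
  have hw0 : ∃ w : V, Sum.inr w ∉ S1 := by
    induction z0 using Sym2.ind with
    | _ u0 v0 =>
      by_contra hall
      push_neg at hall
      exact hNoEdge u0 v0 ((SimpleGraph.mem_edgeSet G).mp hz0) (hall u0) (hall v0)
  obtain ⟨w0, hw0⟩ := hw0
  have hw0S2 : (Sum.inr w0 : BetaVert V G k) ∉ S2 := hinrS2 w0 hw0
  have hw0c : (Sum.inr w0 : BetaVert V G k) ∈ S2ᶜ ∩ betaN G k := ⟨hw0S2, w0, rfl⟩
  have hc2N : 1 ≤ (S2ᶜ ∩ betaN G k).ncard := by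
    rw [Nat.one_le_iff_ne_zero]
    intro h0
    rw [Set.ncard_eq_zero (Set.toFinite _), Set.eq_empty_iff_forall_notMem] at h0
    exact h0 _ hw0c
  -- cardinal facts about D
  have hdk : k ≤ D.ncard := by omega
  have hL2 : 2 ≤ lsize G k := by omega
  refine ⟨S2, ⟨?_, ?_, ?_⟩, ?_, ?_⟩
  · rw [Set.ssubset_univ_iff]
    intro hEq
    rw [hEq] at hw0S2
    exact hw0S2 (Set.mem_univ _)
  · omega
  · rintro ((a | e) | u) hx
    · rw [degIn_L, degIn_L, j2]
      simp
    · -- the main inequality, at an edge-vertex e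
      obtain ⟨z, hz⟩ := e
      induction z using Sym2.ind with
      | _ u v =>
        have hadj : G.Adj u v := (SimpleGraph.mem_edgeSet G).mp hz
        have hnb : ¬(Sum.inr u ∈ S1 ∧ Sum.inr v ∈ S1) := by
          rintro ⟨h1, h2⟩; exact hNoEdge u v hadj h1 h2
        rw [degIn_M, degIn_M, i1, ncard_betaL, j1]
        set A := {w : V | w ∉ ((⟨s(u, v), hz⟩ : ↥G.edgeSet) : Sym2 V)} with hA
        have hsubN : Sum.inr '' A ⊆ betaN G k := by
          rintro x ⟨w, -, rfl⟩; exact ⟨w, rfl⟩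
        have k1 : S2 ∩ Sum.inr '' A = D ∩ Sum.inr '' A := by
          ext x
          constructor
          · rintro ⟨h1, h2⟩
            have : x ∈ S2 ∩ betaN G k := ⟨h1, hsubN h2⟩
            rw [i3] at this
            exact ⟨this, h2⟩
          · rintro ⟨h1, h2⟩
            exact ⟨hDS2 h1, h2⟩
        rw [k1]
        -- lower bound on |D ∩ inr '' A|
        have hdiffsub : ∀ x ∈ D \ Sum.inr '' A,
            x = (Sum.inr u : BetaVert V G k) ∨ x = Sum.inr v := by
          rintro x ⟨hxD, hxA⟩
          obtain ⟨-, w, rfl⟩ := hxD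
          by_cases hwA : w ∈ A
          · exact absurd ⟨w, hwA, rfl⟩ hxA
          · rw [hA, Set.mem_setOf_eq, not_not] at hwA
            rcases Sym2.mem_iff.mp hwA with rfl | rfl
            · exact Or.inl rfl
            · exact Or.inr rfl
        have hdiff1 : (D \ Sum.inr '' A).ncard ≤ 1 := by
          by_cases huS : Sum.inr u ∈ S1
          · have hvS : Sum.inr v ∉ S1 := fun hvS => hnb ⟨huS, hvS⟩
            have : D \ Sum.inr '' A ⊆ {Sum.inr u} := by
              intro x hx
              rcases hdiffsub x hx with rfl | rfl
              · rfl
              · exact absurd hx.1.1 hvS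
            simpa using Set.ncard_le_ncard this (Set.toFinite _)
          · have : D \ Sum.inr '' A ⊆ {Sum.inr v} := by
              intro x hx
              rcases hdiffsub x hx with rfl | rfl
              · exact absurd hx.1.1 huS
              · rfl
            simpa using Set.ncard_le_ncard this (Set.toFinite _)
        have hDsplit := Set.ncard_inter_add_ncard_diff_eq_ncard D (Sum.inr '' A)
        -- upper bound on |S2ᶜ ∩ inr '' A|
        obtain ⟨w1, hw1e, hw1S⟩ : ∃ w1 : V, (w1 = u ∨ w1 = v) ∧ Sum.inr w1 ∉ S1 := by
          by_cases huS : Sum.inr u ∈ S1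
          · exact ⟨v, Or.inr rfl, fun hvS => hnb ⟨huS, hvS⟩⟩
          · exact ⟨u, Or.inl rfl, huS⟩
        have hw1c : (Sum.inr w1 : BetaVert V G k) ∈ S2ᶜ ∩ betaN G k :=
          ⟨hinrS2 w1 hw1S, w1, rfl⟩
        have hw1A : (Sum.inr w1 : BetaVert V G k) ∉ Sum.inr '' A := by
          rintro ⟨w, hwA, hww⟩
          rw [Sum.inr.injEq] at hww
          subst hww
          rw [hA, Set.mem_setOf_eq] at hwA
          rcases hw1e with rfl | rfl
          · exact hwA (Sym2.mem_mk_left _ _)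
          · exact hwA (Sym2.mem_mk_right _ _)
        have hupper : (S2ᶜ ∩ Sum.inr '' A).ncard + 1 ≤ (S2ᶜ ∩ betaN G k).ncard := by
          have hsub2 : (S2ᶜ ∩ Sum.inr '' A) ∪ {Sum.inr w1} ⊆ S2ᶜ ∩ betaN G k := by
            rintro x (⟨h1, h2⟩ | h)
            · exact ⟨h1, hsubN h2⟩
            · rw [Set.mem_singleton_iff] at h; subst h; exact hw1c
          have hdisj2 : Disjoint (S2ᶜ ∩ Sum.inr '' A)
              ({Sum.inr w1} : Set (BetaVert V G k)) := by
            rw [Set.disjoint_left]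
            rintro x ⟨-, hxA⟩ hxw
            rw [Set.mem_singleton_iff] at hxw
            subst hxw
            exact hw1A hxA
          have h := Set.ncard_le_ncard hsub2 (Set.toFinite _)
          rw [Set.ncard_union_eq hdisj2, Set.ncard_singleton] at h
          exact h
        -- final arithmetic
        have hS2c : S2ᶜ.ncard = (S2ᶜ ∩ betaN G k).ncard := by omega
        have hmono : G.edgeSet.ncard * ((S2ᶜ ∩ betaN G k).ncard - 1) ≤
            G.edgeSet.ncard * (Fintype.card V - k - 1) :=
          Nat.mul_le_mul_left _ (by omega)
        rw [← hq] at hmono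
        -- abbreviations
        set A1 := (S2ᶜ ∩ betaN G k).ncard
        set dS := (D ∩ Sum.inr '' A).ncard
        set dC := (S2ᶜ ∩ Sum.inr '' A).ncard
        -- m * (A1 - 1) ≤ L' + dS - something: chain
        have hBineq : G.edgeSet.ncard * (A1 - 1) + k ≤ lsize G k + D.ncard - 1 + k := by
          have : q ≤ lsize G k + D.ncard - 1 + k - G.edgeSet.ncard * 0 := by omega
          omega
        have step2 : dC * (S2.ncard - 1) ≤
            (A1 - 1) * ((lsize G k + D.ncard - 1) + G.edgeSet.ncard) := by
          apply Nat.mul_le_mul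
          · omega
          · omega
        have step3 : (A1 - 1) * ((lsize G k + D.ncard - 1) + G.edgeSet.ncard) =
            (A1 - 1) * (lsize G k + D.ncard - 1) + (A1 - 1) * G.edgeSet.ncard := by
          rw [Nat.mul_add]
        have step4 : (A1 - 1) * G.edgeSet.ncard ≤ lsize G k + D.ncard - 1 := by
          rw [mul_comm]
          omega
        have step5 : (A1 - 1) * (lsize G k + D.ncard - 1) + (lsize G k + D.ncard - 1) =
            A1 * (lsize G k + D.ncard - 1) := by
          conv_rhs => rw [show A1 = (A1 - 1) + 1 from by omega]
          rw [Nat.succ_mul]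
        have step6 : A1 * (lsize G k + D.ncard - 1) ≤ (lsize G k + dS) * S2ᶜ.ncard := by
          rw [hS2c, mul_comm A1 (lsize G k + D.ncard - 1)]
          exact Nat.mul_le_mul_right A1 (by omega)
        simp only [zero_add]
        omega
    · rw [degIn_N_zero S2 hMS2 u]
      simp
  · omega
  · rw [betaLM_eq]
    exact Set.union_subset hLS2 hMS2
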